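/- Let n ≥ 1, let c be a point of the Euclidean space ℝⁿ with 0 < ‖c‖ < 1, let R > 0, and set s := ‖c‖ and α := cosh²(R/2)·(1 − s²). Then for every x ∈ ℝⁿ, the equation (1 − ⟨c,x⟩)² = α·(1 − ‖x‖²) holds if and only if, writing λ := ⟨c,x⟩/s and z := x − (⟨c,x⟩/s²)·c, one has (λ − s/(s²+α))²·(s²+α)²/(α·(s²+α−1)) + ‖z‖²·(s²+α)/(s²+α−1) = 1; moreover every such x satisfies ‖x‖ < 1. Consequently the Hilbert sphere S_h(c,R) = {x ∈ 𝔹ⁿ : h(x,c) = R} is the ellipsoid of revolution with center c/(cosh²(R/2) − s²·sinh²(R/2)), minor semi-axis (along c) equal to (1/2)(1−s²)·sinh(R)/(cosh²(R/2) − s²·sinh²(R/2)) and all other semi-axes equal to sinh(R/2)·√(1−s²)/√(cosh²(R/2) − s²·sinh²(R/2)). -/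

import Mathlib

set_option maxHeartbeats 2000000


/-- Theorem 4.2: for `c` in the unit ball of `ℝⁿ` with `0 < ‖c‖ < 1` and `R > 0`, setting
`s = ‖c‖` and `α = cosh²(R/2)(1−s²)`, a point `x` satisfies `(1−⟨c,x⟩)² = α(1−‖x‖²)`
(i.e. `h(x,c) = R`) iff it satisfies the canonical ellipsoid equation with center
`c/(s²+α)`, minor semi-axis `√(α(s²+α−1))/(s²+α)` along `c` and the other semi-axes
`√((s²+α−1)/(s²+α))`; moreover every such `x` lies in the unit ball. Consequently the
Hilbert sphere `S_h(c,R)` is the ellipsoid of revolution with center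
`c/(cosh²(R/2) − s²sinh²(R/2))`, minor semi-axis `(1/2)(1−s²)sinh R/(cosh²(R/2) − s²sinh²(R/2))`
and the other semi-axes `sinh(R/2)√(1−s²)/√(cosh²(R/2) − s²sinh²(R/2))`. -/
theorem stmt_19 (n : ℕ) (hn : 1 ≤ n) (c : EuclideanSpace ℝ (Fin n))
    (hc0 : 0 < ‖c‖) (hc1 : ‖c‖ < 1) (R : ℝ) (hR : 0 < R) :
    let s : ℝ := ‖c‖
    let α : ℝ := Real.cosh (R / 2)^2 * (1 - s^2)
    (∀ x : EuclideanSpace ℝ (Fin n),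
      ((1 - (inner ℝ c x : ℝ))^2 = α * (1 - ‖x‖^2) ↔
        ((inner ℝ c x : ℝ) / s - s / (s^2 + α))^2 * (s^2 + α)^2 / (α * (s^2 + α - 1)) +
          ‖x - ((inner ℝ c x : ℝ) / s^2) • c‖^2 * (s^2 + α) / (s^2 + α - 1) = 1) ∧
      ((1 - (inner ℝ c x : ℝ))^2 = α * (1 - ‖x‖^2) → ‖x‖ < 1)) ∧
    s^2 + α = Real.cosh (R / 2)^2 - s^2 * Real.sinh (R / 2)^2 ∧
    Real.sqrt (α * (s^2 + α - 1)) / (s^2 + α) =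
      (1 / 2) * (1 - s^2) * Real.sinh R /
        (Real.cosh (R / 2)^2 - s^2 * Real.sinh (R / 2)^2) ∧
    Real.sqrt ((s^2 + α - 1) / (s^2 + α)) =
      Real.sinh (R / 2) * Real.sqrt (1 - s^2) /
        Real.sqrt (Real.cosh (R / 2)^2 - s^2 * Real.sinh (R / 2)^2) := by
  intro s α
  have hsc : s = ‖c‖ := rfl
  have hαd : α = Real.cosh (R / 2)^2 * (1 - s^2) := rfl
  clear_value s α
  have hs : (0:ℝ) < s := hsc ▸ hc0
  have hs1 : s < 1 := hsc ▸ hc1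
  have hs2 : (0:ℝ) < 1 - s^2 := by nlinarith
  have hcosh : Real.cosh (R/2)^2 = Real.sinh (R/2)^2 + 1 := Real.cosh_sq _
  have hsinhpos : 0 < Real.sinh (R/2) := Real.sinh_pos_iff.2 (by linarith)
  have hα : 0 < α := by rw [hαd]; positivity
  have hkey : s^2 + α - 1 = Real.sinh (R/2)^2 * (1 - s^2) := by
    rw [hαd]; nlinarith [hcosh]
  have hm1 : 0 < s^2 + α - 1 := by rw [hkey]; positivity
  have hsum : 0 < s^2 + α := by linarith
  have hsum' : s^2 + α = Real.cosh (R / 2)^2 - s^2 * Real.sinh (R / 2)^2 := by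
    rw [hαd]; nlinarith [hcosh]
  refine ⟨?_, hsum', ?_, ?_⟩
  · intro x
    set t : ℝ := (inner ℝ c x : ℝ) with ht
    have hic : (inner ℝ x c : ℝ) = t := by rw [real_inner_comm]
    have hz : ‖x - (t / s^2) • c‖^2 = ‖x‖^2 - t^2 / s^2 := by
      rw [norm_sub_sq_real, real_inner_smul_right, hic]
      have h1 : ‖(t / s^2) • c‖^2 = (t/s^2)^2 * s^2 := by
        rw [norm_smul, mul_pow, Real.norm_eq_abs, sq_abs, hsc]
      rw [h1]; field_simp; ring
    refine ⟨?_, ?_⟩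
    · rw [hz]
      constructor
      · intro h
        field_simp
        linear_combination (s^2*(s^2+α))*h
      · intro h
        field_simp at h
        have hfac : (0:ℝ) < s^4*(s^2+α)^3*(s^2+α-1) :=
          mul_pos (mul_pos (pow_pos hs 4) (pow_pos hsum 3)) hm1
        have h2 : (s^4*(s^2+α)^3*(s^2+α-1)) * ((1-t)^2 - α*(1-‖x‖^2)) = 0 := by
          linear_combination (s^2*(s^2+α)^2*(s^2+α-1))*h
        rcases mul_eq_zero.1 h2 with h4 | h4
        · exact absurd h4 (ne_of_gt hfac)
        · linarith
    · intro h
      have h1 : 1 - ‖x‖^2 ≥ 0 := by nlinarith [sq_nonneg (1 - t)]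
      rcases eq_or_lt_of_le h1 with he | hl
      · exfalso
        have ht1 : t = 1 := by nlinarith [sq_nonneg (1-t)]
        have hcs : t ≤ s * ‖x‖ := by
          rw [hsc]; exact real_inner_le_norm c x
        have hx1 : ‖x‖^2 = 1 := by linarith
        have hxx : ‖x‖ = 1 := by nlinarith [norm_nonneg x]
        rw [hxx] at hcs; nlinarith
      · nlinarith [norm_nonneg x]
  · have e1 : α*(s^2+α-1) = (Real.cosh (R/2)*Real.sinh (R/2)*(1-s^2))^2 := by
      rw [hαd]; nlinarith [hcosh]
    have hnn : (0:ℝ) ≤ Real.cosh (R/2)*Real.sinh (R/2)*(1-s^2) :=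
      le_of_lt (mul_pos (mul_pos (Real.cosh_pos _) hsinhpos) hs2)
    rw [e1, Real.sqrt_sq hnn, ← hsum']
    have e2 : Real.sinh R = 2*Real.sinh (R/2)*Real.cosh (R/2) := by
      rw [show R = 2*(R/2) by ring, Real.sinh_two_mul]; ring
    rw [e2]; ring
  · rw [← hsum', hkey, Real.sqrt_div (by positivity), Real.sqrt_mul (sq_nonneg _),
      Real.sqrt_sq hsinhpos.le]
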